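/- Let 0 < α < 1, M ∈ ℕ, and let a be a 1/(1+α)-atom supported on I_M (so ∫_{I_M} a dμ = 0 and ‖a‖_∞ ≤ 2^{M(1+α)}). There exists a constant c_α depending only on α such that for every n > 2^M, all integers 0 ≤ k < M, and every x ∈ I_M(e_k), |σ_n^α a(x)| ≤ c_α 2^{αM + k}. -/

import Mathlib

open MeasureTheory Filter Finset
open scoped ENNReal NNReal

noncomputable section

/-- The dyadic group `G = ∏ Z₂`. -/
abbrev G : Type := ℕ → ZMod 2

instance : TopologicalSpace (ZMod 2) := ⊥
instance : DiscreteTopology (ZMod 2) := ⟨rfl⟩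
instance : MeasurableSpace (ZMod 2) := ⊤
instance : BorelSpace (ZMod 2) := ⟨borel_eq_top_of_discrete.symm⟩
instance : ContinuousAdd (ZMod 2) := ⟨continuous_of_discreteTopology⟩
instance : ContinuousNeg (ZMod 2) := ⟨continuous_of_discreteTopology⟩
instance : IsTopologicalAddGroup (ZMod 2) := ⟨⟩

/-- The normalized Haar measure `μ` on the dyadic group `G`. -/
def μG : Measure G := Measure.addHaarMeasure ⊤

/-- The Rademacher functions `r_k(x) = (-1)^{x_k}`. -/
def rad (k : ℕ) (x : G) : ℝ := (-1 : ℝ) ^ (x k).val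

/-- The Walsh functions `w_n = ∏_k r_k^{n_k}`, where `n = ∑ n_k 2^k`. -/
def walsh (n : ℕ) (x : G) : ℝ := ∏ k ∈ Finset.range n, rad k x ^ (Nat.testBit n k).toNat

/-- The Dirichlet kernels `D_n = ∑_{k=0}^{n-1} w_k`. -/
def dirichlet (n : ℕ) (x : G) : ℝ := ∑ k ∈ Finset.range n, walsh k x

/-- The Fejér kernels `K_n = (1/n) ∑_{k=1}^{n} D_k`. -/
def fejer (n : ℕ) (x : G) : ℝ := (n : ℝ)⁻¹ * ∑ k ∈ Finset.Icc 1 n, dirichlet k x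

/-- The Cesàro numbers `A_n^α = ((α+1)⋯(α+n))/n!`. -/
def cesA (α : ℝ) (n : ℕ) : ℝ := (∏ i ∈ Finset.range n, (α + i + 1)) / n.factorial

/-- The `(C,α)` kernels `K_n^α = (1/A_n^α) ∑_{k=1}^n A_{n-k}^{α-1} D_k`. -/
def cesKernel (α : ℝ) (n : ℕ) (x : G) : ℝ :=
  (cesA α n)⁻¹ * ∑ k ∈ Finset.Icc 1 n, cesA (α - 1) (n - k) * dirichlet k x

/-- Walsh–Fourier coefficients of an integrable function. -/
def walshCoeff (f : G → ℝ) (k : ℕ) : ℝ := ∫ x, f x * walsh k x ∂μG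

/-- Partial sums `S_m f` of the Walsh–Fourier series. -/
def partialSum (f : G → ℝ) (m : ℕ) (x : G) : ℝ :=
  ∑ k ∈ Finset.range m, walshCoeff f k * walsh k x

/-- The `(C,α)` means `σ_n^α f = (1/A_n^α) ∑_{k=1}^n A_{n-k}^{α-1} S_k f`. -/
def cesaroMean (α : ℝ) (f : G → ℝ) (n : ℕ) (x : G) : ℝ :=
  (cesA α n)⁻¹ * ∑ k ∈ Finset.Icc 1 n, cesA (α - 1) (n - k) * partialSum f k x

/-- The dyadic interval `I_n(x)`. -/
def dyadicI (n : ℕ) (x : G) : Set G := {y | ∀ i < n, y i = x i}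

/-- `e_k ∈ G`: the element whose `k`-th coordinate is `1` and all others `0`. -/
def eG (k : ℕ) : G := fun i => if i = k then 1 else 0

/-- The projection onto the first `n` coordinates. -/
def projG (n : ℕ) : G → (Fin n → ZMod 2) := fun x i => x i

/-- The dyadic filtration `ℱ_n`, generated by the dyadic intervals of length `n`. -/
def dyadicF : Filtration ℕ (inferInstance : MeasurableSpace G) where
  seq n := MeasurableSpace.comap (projG n) inferInstance
  mono' := by
    intro n m hnm
    have h : projG n = (fun (y : Fin m → ZMod 2) (i : Fin n) => y (Fin.castLE hnm i)) ∘ projG m :=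
      rfl
    simp only []
    rw [h, ← MeasurableSpace.comap_comp]
    exact MeasurableSpace.comap_mono
      ((measurable_pi_lambda _ fun i => measurable_pi_apply _).comap_le)
  le' := fun n => (measurable_pi_lambda _ fun i => measurable_pi_apply _).comap_le

/-- The Walsh–Fourier coefficients `F̂(k) = lim_n ∫ F_n w_k dμ` of a martingale. -/
def martCoeff (F : ℕ → G → ℝ) (k : ℕ) : ℝ :=
  limUnder atTop (fun n => ∫ x, F n x * walsh k x ∂μG)

/-- Partial sums `S_m F` of the Walsh–Fourier series of a martingale. -/
def martSum (F : ℕ → G → ℝ) (m : ℕ) (x : G) : ℝ :=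
  ∑ k ∈ Finset.range m, martCoeff F k * walsh k x

/-- The `(C,α)` means of a martingale. -/
def martCesaro (α : ℝ) (F : ℕ → G → ℝ) (n : ℕ) (x : G) : ℝ :=
  (cesA α n)⁻¹ * ∑ k ∈ Finset.Icc 1 n, cesA (α - 1) (n - k) * martSum F k x

/-- The `L_p(G)` quasi-norm `(∫ |f|^p dμ)^{1/p}`, valued in `ℝ≥0∞`. -/
def LpNormG (p : ℝ) (f : G → ℝ) : ℝ≥0∞ :=
  (∫⁻ x, ENNReal.ofReal |f x| ^ p ∂μG) ^ (1 / p)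

/-- The Hardy space quasi-norm `‖F‖_{H_p} = ‖sup_n |F_n|‖_p` of a martingale. -/
def hardyNorm (p : ℝ) (F : ℕ → G → ℝ) : ℝ≥0∞ :=
  (∫⁻ x, (⨆ n, ENNReal.ofReal |F n x|) ^ p ∂μG) ^ (1 / p)

/-- The Hardy quasi-norm of an integrable function, via its generated martingale `(E_n f)`. -/
def hardyFnNorm (p : ℝ) (f : G → ℝ) : ℝ≥0∞ :=
  hardyNorm p (fun n => μG[f | dyadicF n])



/-! ### Auxiliary lemmas -/

section Aux

lemma zmod2_cases' (u : ZMod 2) : u = 0 ∨ u = 1 := by revert u; decide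

lemma rad_add' (j : ℕ) (x t : G) : rad j (x + t) = rad j x * rad j t := by
  show (-1:ℝ) ^ ((x + t) j).val = _
  have hxt : (x + t) j = x j + t j := rfl
  rw [hxt]
  rcases zmod2_cases' (x j) with h1 | h1 <;> rcases zmod2_cases' (t j) with h2 | h2 <;>
    simp [rad, h1, h2, (by decide : (1 + 1 : ZMod 2) = 0),
      (by decide : ZMod.val (0 : ZMod 2) = 0), (by decide : ZMod.val (1 : ZMod 2) = 1)]

lemma abs_rad' (j : ℕ) (x : G) : |rad j x| = 1 := by
  rcases zmod2_cases' (x j) with h | h <;> simp [rad, h]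

lemma abs_walsh_le' (n : ℕ) (x : G) : |walsh n x| ≤ 1 := by
  rw [walsh, Finset.abs_prod]
  apply Finset.prod_le_one (fun i _ => abs_nonneg _)
  intro i _
  rw [abs_pow, abs_rad', one_pow]

lemma walsh_add' (n : ℕ) (x t : G) : walsh n (x + t) = walsh n x * walsh n t := by
  rw [walsh, walsh, walsh, ← Finset.prod_mul_distrib]
  exact Finset.prod_congr rfl fun i _ => by rw [rad_add', mul_pow]

lemma walsh_eq_prod' (n N : ℕ) (h : n ≤ N) (x : G) :
    walsh n x = ∏ i ∈ Finset.range N, rad i x ^ (Nat.testBit n i).toNat := by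
  rw [walsh]
  apply Finset.prod_subset (Finset.range_subset_range.2 h)
  intro i _ hi
  rw [Finset.mem_range, not_lt] at hi
  have : Nat.testBit n i = false :=
    Nat.testBit_eq_false_of_lt
      (lt_of_lt_of_le Nat.lt_two_pow_self (Nat.pow_le_pow_right (by norm_num) hi))
  rw [this, Bool.toNat_false, pow_zero]

lemma testBit_mul_add_low' (q s r i : ℕ) (hr : r < 2^s) (hi : i < s) :
    Nat.testBit (q * 2^s + r) i = Nat.testBit r i := by
  have h1 : (q * 2^s + r) % 2^s = r := by
    rw [Nat.add_mod, Nat.mul_mod_left, Nat.mod_eq_of_lt hr]; simp [Nat.mod_eq_of_lt hr]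
  have h2 := Nat.testBit_mod_two_pow (q * 2^s + r) s i
  rw [h1] at h2
  rw [h2, decide_eq_true hi, Bool.true_and]

lemma testBit_mul_low' (q s i : ℕ) (hi : i < s) : Nat.testBit (q * 2^s) i = false := by
  have := testBit_mul_add_low' q s 0 i (Nat.pow_pos (by norm_num)) hi
  simpa using this

lemma testBit_mul_add_high' (q s r i : ℕ) (hr : r < 2^s) (hi : s ≤ i) :
    Nat.testBit (q * 2^s + r) i = Nat.testBit (q * 2^s) i := by
  rw [Nat.testBit_eq_decide_div_mod_eq, Nat.testBit_eq_decide_div_mod_eq]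
  congr 2
  have e : 2^i = 2^s * 2^(i-s) := by rw [← pow_add, Nat.add_sub_cancel' hi]
  rw [e, ← Nat.div_div_eq_div_mul, ← Nat.div_div_eq_div_mul]
  congr 2
  rw [mul_comm q, Nat.mul_add_div (Nat.pow_pos (by norm_num)),
    Nat.div_eq_of_lt hr, Nat.mul_div_cancel_left _ (Nat.pow_pos (by norm_num))]
  omega

lemma walsh_block' (q s r : ℕ) (hr : r < 2^s) (x : G) :
    walsh (q * 2^s + r) x = walsh (q * 2^s) x * walsh r x := by
  set N := q * 2^s + r + 1 with hN
  rw [walsh_eq_prod' _ N (by omega) x, walsh_eq_prod' (q*2^s) N (by omega) x,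
    walsh_eq_prod' r N (by omega) x, ← Finset.prod_mul_distrib]
  apply Finset.prod_congr rfl
  intro i _
  rw [← pow_add]
  congr 1
  rcases lt_or_ge i s with hi | hi
  · rw [testBit_mul_add_low' q s r i hr hi, testBit_mul_low' q s i hi]
    simp
  · rw [testBit_mul_add_high' q s r i hr hi,
      Nat.testBit_eq_false_of_lt (lt_of_lt_of_le hr (Nat.pow_le_pow_right (by norm_num) hi))]
    simp

lemma walsh_two_pow_add' (s j : ℕ) (hj : j < 2^s) (x : G) :
    walsh (2^s + j) x = rad s x * walsh j x := by
  have h1 : walsh (2^s + j) x = walsh (2^s) x * walsh j x := by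
    have := walsh_block' 1 s j hj x
    simpa using this
  have h2 : walsh (2^s) x = rad s x := by
    rw [walsh]
    rw [Finset.prod_eq_single s]
    · rw [Nat.testBit_two_pow_self]; simp
    · intro i _ his
      rw [Nat.testBit_two_pow_of_ne (Ne.symm his)]; simp
    · intro h
      exact absurd (Finset.mem_range.2 (show s < 2^s from Nat.lt_two_pow_self)) h
  rw [h1, h2]

lemma dirichlet_two_pow' (s : ℕ) (x : G) :
    dirichlet (2^s) x = ∏ i ∈ Finset.range s, (1 + rad i x) := by
  induction s with
  | zero => simp [dirichlet, walsh]
  | succ s ih =>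
    rw [Finset.prod_range_succ, ← ih, dirichlet, pow_succ, mul_two,
      ← Finset.sum_range_add_sum_Ico _ (Nat.le_add_right _ _), Finset.sum_Ico_eq_sum_range]
    simp only [Nat.add_sub_cancel_left]
    have h : ∀ j ∈ Finset.range (2^s), walsh (2^s + j) x = rad s x * walsh j x := by
      intro j hj
      exact walsh_two_pow_add' s j (Finset.mem_range.1 hj) x
    rw [Finset.sum_congr rfl h, ← Finset.mul_sum, dirichlet]
    ring

lemma dirichlet_bound' {k : ℕ} {y : G} (hk : y k = 1) (m : ℕ) :
    |dirichlet m y| ≤ 2^(k+1) := by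
  set s := k + 1 with hs
  have hD0 : dirichlet (2^s) y = 0 := by
    rw [dirichlet_two_pow', hs, Finset.prod_range_succ]
    have : rad k y = -1 := by
      rw [rad, hk, (by decide : ZMod.val (1 : ZMod 2) = 1)]; norm_num
    rw [this]; ring
  have blockzero : ∀ q : ℕ, ∑ j ∈ Finset.range (q * 2^s), walsh j y = 0 := by
    intro q
    induction q with
    | zero => simp
    | succ q ih =>
      rw [Nat.succ_mul, ← Finset.sum_range_add_sum_Ico _ (Nat.le_add_right (q * 2^s) (2^s)), ih,
        Finset.sum_Ico_eq_sum_range]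
      simp only [Nat.add_sub_cancel_left]
      have h : ∀ j ∈ Finset.range (2^s), walsh (q * 2^s + j) y = walsh (q * 2^s) y * walsh j y :=
        fun j hj => walsh_block' q s j (Finset.mem_range.1 hj) y
      rw [Finset.sum_congr rfl h, ← Finset.mul_sum]
      rw [show ∑ j ∈ Finset.range (2^s), walsh j y = dirichlet (2^s) y from rfl, hD0]
      ring
  have hm : m = m / 2^s * 2^s + m % 2^s := by
    rw [mul_comm]; exact (Nat.div_add_mod m (2^s)).symm
  set q := m / 2^s
  set r := m % 2^s with hr
  have hrlt : r < 2^s := Nat.mod_lt _ (Nat.pow_pos (by norm_num))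
  rw [dirichlet, hm, ← Finset.sum_range_add_sum_Ico _ (Nat.le_add_right (q * 2^s) r),
    blockzero q, Finset.sum_Ico_eq_sum_range]
  simp only [Nat.add_sub_cancel_left, zero_add]
  have h : ∀ j ∈ Finset.range r, walsh (q * 2^s + j) y = walsh (q * 2^s) y * walsh j y :=
    fun j hj => walsh_block' q s j (lt_trans (Finset.mem_range.1 hj) hrlt) y
  rw [Finset.sum_congr rfl h, ← Finset.mul_sum, abs_mul]
  calc |walsh (q * 2^s) y| * |∑ j ∈ Finset.range r, walsh j y|
      ≤ 1 * ∑ j ∈ Finset.range r, |walsh j y| := by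
        exact mul_le_mul (abs_walsh_le' _ _) (Finset.abs_sum_le_sum_abs _ _)
          (abs_nonneg _) zero_le_one
    _ ≤ 1 * ∑ j ∈ Finset.range r, 1 := by
        exact mul_le_mul_of_nonneg_left
          (Finset.sum_le_sum (fun j _ => abs_walsh_le' j y)) zero_le_one
    _ ≤ 2^(k+1) := by
        simp only [Finset.sum_const, Finset.card_range, nsmul_eq_mul, mul_one, one_mul]
        rw [hs] at hrlt
        calc (r : ℝ) ≤ ((2^(k+1) : ℕ) : ℝ) := by exact_mod_cast le_of_lt hrlt
          _ = 2^(k+1) := by push_cast; ring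

lemma cesA_pos' {α : ℝ} (hα : -1 < α) (n : ℕ) : 0 < cesA α n := by
  apply div_pos
  · apply Finset.prod_pos
    intro i _
    have : (0:ℝ) ≤ i := Nat.cast_nonneg i
    linarith
  · exact_mod_cast Nat.factorial_pos n

lemma cesA_pascal' (α : ℝ) (n : ℕ) : cesA α (n+1) = cesA α n + cesA (α-1) (n+1) := by
  have hf : ((n+1).factorial : ℝ) ≠ 0 := by exact_mod_cast (Nat.factorial_pos (n+1)).ne'
  have hf' : ((n).factorial : ℝ) ≠ 0 := by exact_mod_cast (Nat.factorial_pos n).ne'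
  have hQ : ∏ i ∈ Finset.range (n+1), (α - 1 + i + 1)
      = α * ∏ i ∈ Finset.range n, (α + i + 1) := by
    rw [Finset.prod_range_succ']
    have h : ∀ i ∈ Finset.range n, (α - 1 + ((i:ℕ)+1 : ℕ) + 1) = (α + i + 1) := by
      intro i _; push_cast; ring
    rw [Finset.prod_congr rfl h]
    push_cast
    ring
  have hP : ∏ i ∈ Finset.range (n+1), (α + i + 1)
      = (α + n + 1) * ∏ i ∈ Finset.range n, (α + i + 1) := by
    rw [Finset.prod_range_succ]; ring
  rw [cesA, cesA, cesA, hQ, hP, Nat.factorial_succ]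
  push_cast
  field_simp
  ring

lemma cesA_sum' (α : ℝ) (n : ℕ) : ∑ m ∈ Finset.range (n+1), cesA (α-1) m = cesA α n := by
  induction n with
  | zero => simp [cesA]
  | succ n ih => rw [Finset.sum_range_succ, ih]; exact (cesA_pascal' α n).symm

lemma cesA_sum_Icc' (α : ℝ) (n : ℕ) (hn : 1 ≤ n) :
    ∑ j ∈ Finset.Icc 1 n, cesA (α-1) (n-j) = cesA α (n-1) := by
  rw [← Finset.Ico_add_one_right_eq_Icc, Finset.sum_Ico_eq_sum_range]
  have h : ∀ i ∈ Finset.range (n + 1 - 1), cesA (α-1) (n - (1 + i)) = cesA (α-1) (n - 1 - i) := by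
    intro i _; congr 1; omega
  rw [Finset.sum_congr rfl h]
  simp only [Nat.add_sub_cancel]
  rw [Finset.sum_range_reflect (fun i => cesA (α-1) i) n]
  have h2 : n = (n - 1) + 1 := by omega
  rw [h2, cesA_sum', Nat.add_sub_cancel]

lemma zmod2_add_eq_zero' (a b : ZMod 2) : a + b = 0 ↔ b = a := by revert a b; decide

lemma measurableSet_dyadicI' (n : ℕ) (x : G) : MeasurableSet (dyadicI n x) := by
  have h : dyadicI n x = ⋂ i, ⋂ (_ : i < n), {y : G | y i = x i} := by
    ext y; simp [dyadicI, Set.mem_iInter]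
  rw [h]
  refine MeasurableSet.iInter fun i => MeasurableSet.iInter fun _ => ?_
  have h2 : {y : G | y i = x i} = (fun y : G => y i) ⁻¹' {x i} := rfl
  rw [h2]
  exact (measurable_pi_apply i) (measurableSet_singleton (x i))

lemma μG_univ' : μG Set.univ = 1 := by
  rw [μG, ← TopologicalSpace.PositiveCompacts.coe_top (α := G)]
  exact Measure.addHaarMeasure_self

instance : IsFiniteMeasure μG := ⟨by rw [μG_univ']; exact ENNReal.one_lt_top⟩

lemma μG_dyadicI_translate' (n : ℕ) (v : G) : μG (dyadicI n v) = μG (dyadicI n 0) := by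
  have h : dyadicI n v = (fun y => v + y) ⁻¹' (dyadicI n 0) := by
    ext y
    simp only [dyadicI, Set.mem_preimage, Set.mem_setOf_eq, Pi.add_apply]
    constructor
    · intro h i hi
      show v i + y i = (0:G) i
      rw [(zmod2_add_eq_zero' (v i) (y i)).2 (h i hi)]; rfl
    · intro h i hi
      exact (zmod2_add_eq_zero' (v i) (y i)).1 (h i hi)
  rw [h]
  have : μG.IsAddLeftInvariant := by rw [μG]; infer_instance
  exact measure_preimage_add μG v _

/-- Extension of a finite 0-1 word by zeros. -/
def extG (M : ℕ) (v : Fin M → ZMod 2) : G := fun i => if h : i < M then v ⟨i, h⟩ else 0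

lemma μG_dyadicI' (M : ℕ) : (2:ENNReal)^M * μG (dyadicI M 0) = 1 := by
  have hunion : (⋃ v : Fin M → ZMod 2, dyadicI M (extG M v)) = Set.univ := by
    ext y
    simp only [Set.mem_iUnion, Set.mem_univ, iff_true]
    refine ⟨fun i => y i, fun i hi => ?_⟩
    simp [extG, hi]
  have hdisj : Pairwise (Function.onFun Disjoint
      (fun v : Fin M → ZMod 2 => dyadicI M (extG M v))) := by
    intro v w hvw
    rw [Function.onFun, Set.disjoint_left]
    intro y hy hy'
    apply hvw
    funext i
    have h1 := hy i.1 i.2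
    have h2 := hy' i.1 i.2
    rw [h1] at h2
    simpa [extG, i.2] using h2
  have hsum := measure_iUnion (μ := μG) hdisj (fun v => measurableSet_dyadicI' M (extG M v))
  rw [hunion, μG_univ', tsum_fintype] at hsum
  have heach : ∀ v : Fin M → ZMod 2, μG (dyadicI M (extG M v)) = μG (dyadicI M 0) :=
    fun v => μG_dyadicI_translate' M (extG M v)
  rw [Finset.sum_congr rfl (fun v _ => heach v), Finset.sum_const] at hsum
  rw [hsum, Finset.card_univ, Fintype.card_fun, ZMod.card 2, Fintype.card_fin, nsmul_eq_mul]
  congr 1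
  simp

lemma μG_dyadicI_toReal' (M : ℕ) : (μG (dyadicI M 0)).toReal = ((2:ℝ)^M)⁻¹ := by
  have h := μG_dyadicI' M
  have hne : μG (dyadicI M 0) ≠ ⊤ := measure_ne_top μG _
  have h2 : ((2:ENNReal)^M * μG (dyadicI M 0)).toReal = (1:ENNReal).toReal := by rw [h]
  rw [ENNReal.toReal_mul, ENNReal.toReal_pow, ENNReal.toReal_one] at h2
  have h3 : ((2:ENNReal)).toReal = (2:ℝ) := by simp
  rw [h3] at h2
  have hpow : (0:ℝ) < 2^M := by positivity
  field_simp
  linarith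

lemma measurable_rad' (k : ℕ) : Measurable (rad k) :=
  (measurable_from_top (f := fun u : ZMod 2 => ((-1 : ℝ) ^ u.val))).comp (measurable_pi_apply k)

lemma measurable_walsh' (n : ℕ) : Measurable (walsh n) := by
  apply Finset.measurable_prod
  intro i _
  exact (measurable_rad' i).pow_const _

end Aux

/-- pointwise bound for Cesàro means of a `1/(1+α)`-atom on `I_M(e_k)`:
`|σ_n^α a(x)| ≤ c_α 2^{αM+k}` for `n > 2^M`, `0 ≤ k < M`. -/
theorem statement10 (α : ℝ) (hα0 : 0 < α) (hα1 : α < 1) :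
    ∃ c : ℝ, 0 < c ∧ ∀ M : ℕ, ∀ a : G → ℝ, Measurable a →
      (∀ x ∉ dyadicI M 0, a x = 0) →
      (∫ x in dyadicI M 0, a x ∂μG) = 0 →
      eLpNorm a ⊤ μG ≤ ENNReal.ofReal ((2 : ℝ) ^ ((M : ℝ) * (1 + α))) →
      ∀ n : ℕ, 2 ^ M < n → ∀ k : ℕ, k < M →
        ∀ x ∈ dyadicI M (eG k),
          |cesaroMean α a n x| ≤ c * (2 : ℝ) ^ (α * (M : ℝ)) * 2 ^ k := by
  classical
  refine ⟨2, by norm_num, ?_⟩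
  intro M a ha hsupp _hint hsup n hn k hkM x hx
  set C : ℝ := (2:ℝ) ^ ((M : ℝ) * (1 + α)) with hC
  have hC0 : (0:ℝ) ≤ C := le_of_lt (Real.rpow_pos_of_pos (by norm_num) _)
  -- a.e. bound on a
  have hae : ∀ᵐ t ∂μG, |a t| ≤ C := by
    have h1 : ∀ᵐ t ∂μG, (‖a t‖₊ : ℝ≥0∞) ≤ eLpNormEssSup a μG := ae_le_eLpNormEssSup
    rw [eLpNorm_exponent_top] at hsup
    filter_upwards [h1] with t ht
    have h2 : (‖a t‖₊ : ℝ≥0∞) ≤ ENNReal.ofReal C := le_trans ht hsup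
    have h3 : ENNReal.ofReal ‖a t‖ ≤ ENNReal.ofReal C := by
      rw [ofReal_norm]; exact h2
    rw [ENNReal.ofReal_le_ofReal_iff hC0] at h3
    rwa [Real.norm_eq_abs] at h3
  have ha_int : Integrable a μG :=
    ⟨ha.aestronglyMeasurable, HasFiniteIntegral.of_bounded
      (by filter_upwards [hae] with t ht; rwa [Real.norm_eq_abs])⟩
  -- L¹ bound
  have hL1 : ∫ t, |a t| ∂μG ≤ C * ((2:ℝ)^M)⁻¹ := by
    have hmono : ∀ᵐ t ∂μG, |a t| ≤ (dyadicI M 0).indicator (fun _ => C) t := by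
      filter_upwards [hae] with t ht
      by_cases htm : t ∈ dyadicI M 0
      · rw [Set.indicator_of_mem htm]; exact ht
      · rw [Set.indicator_of_notMem htm, hsupp t htm, abs_zero]
    have hind : Integrable ((dyadicI M 0).indicator (fun _ => C)) μG :=
      (integrable_const C).indicator (measurableSet_dyadicI' M 0)
    calc ∫ t, |a t| ∂μG ≤ ∫ t, (dyadicI M 0).indicator (fun _ => C) t ∂μG :=
          integral_mono_ae ha_int.abs hind hmono
      _ = (μG (dyadicI M 0)).toReal • C :=
          integral_indicator_const C (measurableSet_dyadicI' M 0)
      _ = C * ((2:ℝ)^M)⁻¹ := by rw [μG_dyadicI_toReal', smul_eq_mul, mul_comm]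
  -- the point x + t has (x+t) k = 1 for t in the support
  have hxk : x k = 1 := by
    have := hx k hkM
    rw [this]
    simp [eG]
  -- integrability of the integrands
  have hint_w : ∀ j : ℕ, Integrable (fun t => a t * walsh j t * walsh j x) μG := by
    intro j
    have he : (fun t => a t * walsh j t * walsh j x)
        = (fun t => (walsh j t * walsh j x) * a t) := by funext t; ring
    rw [he]
    refine Integrable.bdd_mul (c := 1) ha_int ((measurable_walsh' j).mul_const _).aestronglyMeasurable (Filter.Eventually.of_forall ?_)
    intro t
    rw [Real.norm_eq_abs, abs_mul]
    calc |walsh j t| * |walsh j x| ≤ 1 * 1 :=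
          mul_le_mul (abs_walsh_le' _ _) (abs_walsh_le' _ _) (abs_nonneg _) zero_le_one
      _ = 1 := by ring
  -- partial sums as integrals against the Dirichlet kernel
  have hPS : ∀ j : ℕ, partialSum a j x = ∫ t, a t * dirichlet j (x + t) ∂μG := by
    intro j
    have h1 : partialSum a j x
        = ∑ i ∈ Finset.range j, ∫ t, a t * walsh i t * walsh i x ∂μG := by
      rw [partialSum]
      exact Finset.sum_congr rfl fun i _ => by
        rw [walshCoeff, ← integral_mul_const]
    rw [h1, ← integral_finset_sum _ (fun i _ => hint_w i)]
    apply integral_congr_ae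
    filter_upwards with t
    rw [dirichlet, Finset.mul_sum]
    exact Finset.sum_congr rfl fun i _ => by rw [walsh_add']; ring
  -- integrability of a t * dirichlet j (x+t)
  have hint_D : ∀ j : ℕ, Integrable (fun t => a t * dirichlet j (x + t)) μG := by
    intro j
    have he : (fun t => a t * dirichlet j (x + t))
        = (fun t => ∑ i ∈ Finset.range j, a t * walsh i t * walsh i x) := by
      funext t
      rw [dirichlet, Finset.mul_sum]
      exact Finset.sum_congr rfl fun i _ => by rw [walsh_add']; ring
    rw [he]
    exact integrable_finset_sum _ (fun i _ => hint_w i)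
  -- uniform bound for the partial sums
  have hPSbound : ∀ j : ℕ, |partialSum a j x| ≤ C * ((2:ℝ)^M)⁻¹ * 2^(k+1) := by
    intro j
    have hpt : ∀ t, |a t * dirichlet j (x + t)| ≤ |a t| * 2^(k+1) := by
      intro t
      by_cases htm : t ∈ dyadicI M 0
      · have htk : t k = 0 := by
          have := htm k hkM
          rw [this]; rfl
        have hyk : (x + t) k = 1 := by
          show x k + t k = 1
          rw [hxk, htk, add_zero]
        rw [abs_mul]
        exact mul_le_mul_of_nonneg_left (dirichlet_bound' hyk j) (abs_nonneg _)
      · rw [hsupp t htm, zero_mul, abs_zero]; simp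
    calc |partialSum a j x| = |∫ t, a t * dirichlet j (x + t) ∂μG| := by rw [hPS j]
      _ ≤ ∫ t, |a t * dirichlet j (x + t)| ∂μG := by
          have hni := norm_integral_le_integral_norm (μ := μG)
            (fun t => a t * dirichlet j (x + t))
          simp only [Real.norm_eq_abs] at hni
          exact hni
      _ ≤ ∫ t, |a t| * 2^(k+1) ∂μG :=
          integral_mono (hint_D j).abs (ha_int.abs.mul_const _) hpt
      _ = (∫ t, |a t| ∂μG) * 2^(k+1) := integral_mul_const _ _
      _ ≤ C * ((2:ℝ)^M)⁻¹ * 2^(k+1) := by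
          apply mul_le_mul_of_nonneg_right hL1 (by positivity)
  -- sum up
  have hn1 : 1 ≤ n := le_trans (Nat.one_le_two_pow) (le_of_lt hn)
  have hα1' : (-1:ℝ) < α - 1 := by linarith
  have hα0' : (-1:ℝ) < α := by linarith
  have hApos : 0 < cesA α n := cesA_pos' hα0' n
  set B : ℝ := C * ((2:ℝ)^M)⁻¹ * 2^(k+1) with hB
  have hB0 : 0 ≤ B := by positivity
  have hsumle : |∑ j ∈ Finset.Icc 1 n, cesA (α - 1) (n - j) * partialSum a j x|
      ≤ cesA α n * B := by
    calc |∑ j ∈ Finset.Icc 1 n, cesA (α - 1) (n - j) * partialSum a j x|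
        ≤ ∑ j ∈ Finset.Icc 1 n, |cesA (α - 1) (n - j) * partialSum a j x| :=
          Finset.abs_sum_le_sum_abs _ _
      _ ≤ ∑ j ∈ Finset.Icc 1 n, cesA (α - 1) (n - j) * B := by
          apply Finset.sum_le_sum
          intro j _
          rw [abs_mul, abs_of_pos (cesA_pos' hα1' (n - j))]
          exact mul_le_mul_of_nonneg_left (hPSbound j) (le_of_lt (cesA_pos' hα1' (n - j)))
      _ = (∑ j ∈ Finset.Icc 1 n, cesA (α - 1) (n - j)) * B := by rw [Finset.sum_mul]
      _ = cesA α (n-1) * B := by rw [cesA_sum_Icc' α n hn1]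
      _ ≤ cesA α n * B := by
          apply mul_le_mul_of_nonneg_right _ hB0
          have hp := cesA_pascal' α (n-1)
          rw [Nat.sub_add_cancel hn1] at hp
          have := cesA_pos' hα1' n
          linarith
  have hfinal : |cesaroMean α a n x| ≤ B := by
    rw [cesaroMean, abs_mul, abs_inv, abs_of_pos hApos]
    calc (cesA α n)⁻¹ * |∑ j ∈ Finset.Icc 1 n, cesA (α - 1) (n - j) * partialSum a j x|
        ≤ (cesA α n)⁻¹ * (cesA α n * B) :=
          mul_le_mul_of_nonneg_left hsumle (by positivity)
      _ = B := by field_simp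
  refine le_trans hfinal (le_of_eq ?_)
  rw [hB, hC]
  have h2M : ((2:ℝ)^M)⁻¹ = (2:ℝ) ^ (-(M:ℝ)) := by
    rw [Real.rpow_neg (by norm_num), Real.rpow_natCast]
  rw [h2M, ← Real.rpow_add (by norm_num)]
  have hexp : (M:ℝ) * (1 + α) + (-(M:ℝ)) = α * (M:ℝ) := by ring
  rw [hexp, pow_succ]
  ring


end
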